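/- (Proposition 1 of the paper, channel-independent form.) Under the secrecy-code setup, I(V_A; Z | V_B) ≤ min( Σ_{i∈A∪B} C_i , k ), where C_i := I(V_i; (Z, V_{{1,…,i−1}})) and k = |A|. (Note A ∪ B = R^c.) -/

import Mathlib

open scoped Classical

noncomputable section

/-- `p` is a probability mass function on the finite sample space `Ω`. -/
def IsPMF {Ω : Type} [Fintype Ω] (p : Ω → ℝ) : Prop :=
  (∀ ω, 0 ≤ p ω) ∧ ∑ ω, p ω = 1

/-- `P(X = x)`: the probability of the event `{X = x}` under the pmf `p`. -/
def prob {Ω : Type} [Fintype Ω] (p : Ω → ℝ) {α : Type} (X : Ω → α) (x : α) : ℝ :=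
  ∑ ω, if X ω = x then p ω else 0

/-- Shannon entropy of `X` in bits (logarithm base 2). -/
def entropy {Ω : Type} [Fintype Ω] (p : Ω → ℝ) {α : Type} [Fintype α] (X : Ω → α) : ℝ :=
  -∑ x, prob p X x * Real.logb 2 (prob p X x)

/-- Mutual information `I(X;Y) = H(X) + H(Y) - H((X,Y))` in bits. -/
def mutInfo {Ω : Type} [Fintype Ω] (p : Ω → ℝ) {α β : Type} [Fintype α] [Fintype β]
    (X : Ω → α) (Y : Ω → β) : ℝ :=
  entropy p X + entropy p Y - entropy p fun ω => (X ω, Y ω)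

/-- Conditional mutual information
`I(X;Y∣W) = H((X,W)) + H((Y,W)) - H((X,Y,W)) - H(W)` in bits. -/
def condMutInfo {Ω : Type} [Fintype Ω] (p : Ω → ℝ) {α β γ : Type}
    [Fintype α] [Fintype β] [Fintype γ] (X : Ω → α) (Y : Ω → β) (W : Ω → γ) : ℝ :=
  entropy p (fun ω => (X ω, W ω)) + entropy p (fun ω => (Y ω, W ω))
    - entropy p (fun ω => (X ω, Y ω, W ω)) - entropy p W


namespace SecrecyAux
variable {Ω : Type} [Fintype Ω] (p : Ω → ℝ)

lemma prob_nonneg (hp : IsPMF p) {α : Type} (X : Ω → α) (x : α) : 0 ≤ prob p X x := by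
  unfold prob
  exact Finset.sum_nonneg fun ω _ => by split <;> simp [hp.1 ω]

lemma sum_prob (hp : IsPMF p) {α : Type} [Fintype α] (X : Ω → α) :
    ∑ x, prob p X x = 1 := by
  unfold prob
  rw [Finset.sum_comm]
  simpa using hp.2

lemma prob_congr {α β : Type} (X : Ω → α) (Y : Ω → β) (x : α) (y : β)
    (h : ∀ ω, X ω = x ↔ Y ω = y) : prob p X x = prob p Y y := by
  unfold prob
  exact Finset.sum_congr rfl fun ω _ => if_congr (h ω) rfl rfl

lemma prob_comp {α β : Type} [Fintype α] (X : Ω → α) (g : α → β) (y : β) :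
    prob p (fun ω => g (X ω)) y = ∑ x, if g x = y then prob p X x else 0 := by
  unfold prob
  have : ∀ x, (if g x = y then ∑ ω, (if X ω = x then p ω else 0) else 0)
      = ∑ ω, if X ω = x then (if g x = y then p ω else 0) else 0 := by
    intro x
    split <;> simp_all
  simp only [this]
  rw [Finset.sum_comm]
  refine Finset.sum_congr rfl fun ω _ => ?_
  rw [Finset.sum_ite_eq Finset.univ (X ω) (fun x => if g x = y then p ω else 0)]
  simp

lemma entropy_comp_inj {α β : Type} [Fintype α] [Fintype β] (X : Ω → α)
    (f : α → β) (hf : Function.Injective f) :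
    entropy p (fun ω => f (X ω)) = entropy p X := by
  unfold entropy
  congr 1
  rw [← Finset.sum_subset (Finset.subset_univ (Finset.univ.image f))]
  · rw [Finset.sum_image (fun a _ b _ h => hf h)]
    refine Finset.sum_congr rfl fun a _ => ?_
    have : prob p (fun ω => f (X ω)) (f a) = prob p X a :=
      prob_congr p _ _ _ _ fun ω => by simp [hf.eq_iff]
    rw [this]
  · intro b _ hb
    have : prob p (fun ω => f (X ω)) b = 0 := by
      unfold prob
      refine Finset.sum_eq_zero fun ω _ => ?_
      have : f (X ω) ≠ b := fun h => hb (by simp [← h])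
      simp [this]
    simp [this]

lemma gibbs {ι : Type} [Fintype ι] (a b : ι → ℝ) (ha : ∀ i, 0 ≤ a i)
    (hb : ∀ i, 0 ≤ b i) (hab : ∀ i, a i ≠ 0 → b i ≠ 0)
    (hsa : ∑ i, a i = 1) (hsb : ∑ i, b i ≤ 1) :
    ∑ i, a i * (Real.logb 2 (b i) - Real.logb 2 (a i)) ≤ 0 := by
  have key : ∀ i, a i * (Real.log (b i) - Real.log (a i)) ≤ b i - a i := by
    intro i
    rcases eq_or_lt_of_le (ha i) with h | h
    · simp [← h, hb i]
    · have hbi : 0 < b i := lt_of_le_of_ne (hb i) (Ne.symm (hab i (ne_of_gt h)))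
      have hlog : Real.log (b i) - Real.log (a i) = Real.log (b i / a i) :=
        (Real.log_div hbi.ne' h.ne').symm
      rw [hlog]
      have h2 : Real.log (b i / a i) ≤ b i / a i - 1 :=
        Real.log_le_sub_one_of_pos (div_pos hbi h)
      have h3 : a i * Real.log (b i / a i) ≤ a i * (b i / a i - 1) :=
        mul_le_mul_of_nonneg_left h2 h.le
      calc a i * Real.log (b i / a i) ≤ a i * (b i / a i - 1) := h3
        _ = b i - a i := by field_simp
  have h1 : ∑ i, a i * (Real.log (b i) - Real.log (a i)) ≤ 0 := by
    calc ∑ i, a i * (Real.log (b i) - Real.log (a i)) ≤ ∑ i, (b i - a i) :=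
          Finset.sum_le_sum fun i _ => key i
      _ = (∑ i, b i) - ∑ i, a i := Finset.sum_sub_distrib _ _
      _ ≤ 0 := by rw [hsa]; linarith
  have heq : ∑ i, a i * (Real.logb 2 (b i) - Real.logb 2 (a i))
      = (∑ i, a i * (Real.log (b i) - Real.log (a i))) / Real.log 2 := by
    rw [Finset.sum_div]
    refine Finset.sum_congr rfl fun i _ => ?_
    unfold Real.logb
    ring
  rw [heq]
  exact div_nonpos_of_nonpos_of_nonneg h1 (Real.log_nonneg one_le_two)


lemma sum_triple {α β γ : Type} [Fintype α] [Fintype β] [Fintype γ] (f : α × β × γ → ℝ) :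
    ∑ t, f t = ∑ x, ∑ y, ∑ w, f (x, y, w) := by
  rw [Fintype.sum_prod_type]
  exact Finset.sum_congr rfl fun x _ => Fintype.sum_prod_type _

lemma sum_mul_sum_div {α β : Type} [Fintype α] [Fintype β] (A : α → ℝ) (B : β → ℝ) (c : ℝ) :
    ∑ x, ∑ y, A x * B y / c = (∑ x, A x) * (∑ y, B y) / c := by
  have h : (∑ x, A x) * (∑ y, B y) = ∑ x, ∑ y, A x * B y := by
    rw [Finset.sum_mul]
    exact Finset.sum_congr rfl fun x _ => Finset.mul_sum _ _ _
  rw [h, Finset.sum_div]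
  exact Finset.sum_congr rfl fun x _ => (Finset.sum_div _ _ _).symm

lemma marginal_pair_right {α β : Type} [Fintype α] (X : Ω → α) (Y : Ω → β) (y : β) :
    prob p Y y = ∑ x, prob p (fun ω => (X ω, Y ω)) (x, y) := by
  unfold prob
  rw [Finset.sum_comm]
  refine Finset.sum_congr rfl fun ω _ => ?_
  by_cases h : Y ω = y <;> simp [Prod.ext_iff, h, Finset.sum_ite_eq]

lemma marginal_pair_left {α β : Type} [Fintype β] (X : Ω → α) (Y : Ω → β) (x : α) :
    prob p X x = ∑ y, prob p (fun ω => (X ω, Y ω)) (x, y) := by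
  unfold prob
  rw [Finset.sum_comm]
  refine Finset.sum_congr rfl fun ω _ => ?_
  by_cases h : X ω = x <;> simp [Prod.ext_iff, h, Finset.sum_ite_eq]

lemma marginal_triple_XW {α β γ : Type} [Fintype β] (X : Ω → α) (Y : Ω → β) (W : Ω → γ)
    (x : α) (w : γ) :
    prob p (fun ω => (X ω, W ω)) (x, w)
      = ∑ y, prob p (fun ω => (X ω, Y ω, W ω)) (x, y, w) := by
  unfold prob
  rw [Finset.sum_comm]
  refine Finset.sum_congr rfl fun ω _ => ?_
  by_cases h1 : X ω = x <;> by_cases h2 : W ω = w <;>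
    simp [Prod.ext_iff, h1, h2, Finset.sum_ite_eq]

lemma marginal_triple_YW {α β γ : Type} [Fintype α] (X : Ω → α) (Y : Ω → β) (W : Ω → γ)
    (y : β) (w : γ) :
    prob p (fun ω => (Y ω, W ω)) (y, w)
      = ∑ x, prob p (fun ω => (X ω, Y ω, W ω)) (x, y, w) := by
  unfold prob
  rw [Finset.sum_comm]
  refine Finset.sum_congr rfl fun ω _ => ?_
  by_cases h1 : Y ω = y <;> by_cases h2 : W ω = w <;>
    simp [Prod.ext_iff, h1, h2, Finset.sum_ite_eq]

lemma cmi_nonneg (hp : IsPMF p) {α β γ : Type} [Fintype α] [Fintype β] [Fintype γ]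
    (X : Ω → α) (Y : Ω → β) (W : Ω → γ) : 0 ≤ condMutInfo p X Y W := by
  set T : Ω → α × β × γ := fun ω => (X ω, Y ω, W ω) with hT
  set a : α × β × γ → ℝ := fun t => prob p T t with haa
  set b : α × β × γ → ℝ := fun t =>
    prob p (fun ω => (X ω, W ω)) (t.1, t.2.2) * prob p (fun ω => (Y ω, W ω)) (t.2.1, t.2.2)
      / prob p W t.2.2 with hbb
  have mXW : ∀ x w, prob p (fun ω => (X ω, W ω)) (x, w) = ∑ y, a (x, y, w) :=
    fun x w => marginal_triple_XW p X Y W x w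
  have mYW : ∀ y w, prob p (fun ω => (Y ω, W ω)) (y, w) = ∑ x, a (x, y, w) :=
    fun y w => marginal_triple_YW p X Y W y w
  have mW : ∀ w, prob p W w = ∑ x, prob p (fun ω => (X ω, W ω)) (x, w) :=
    fun w => marginal_pair_right p X W w
  have mW' : ∀ w, prob p W w = ∑ y, prob p (fun ω => (Y ω, W ω)) (y, w) :=
    fun w => marginal_pair_right p Y W w
  have ha : ∀ t, 0 ≤ a t := fun t => prob_nonneg p hp T t
  have hb : ∀ t, 0 ≤ b t := fun t =>
    div_nonneg (mul_nonneg (prob_nonneg p hp _ _) (prob_nonneg p hp _ _)) (prob_nonneg p hp _ _)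
  have posXW : ∀ t : α × β × γ, a t ≠ 0 → 0 < prob p (fun ω => (X ω, W ω)) (t.1, t.2.2) := by
    rintro ⟨x, y, w⟩ h
    have h1 : 0 < a (x, y, w) := lt_of_le_of_ne (ha _) (Ne.symm h)
    have h2 : a (x, y, w) ≤ ∑ y', a (x, y', w) :=
      Finset.single_le_sum (f := fun y' => a (x, y', w)) (fun y' _ => ha _) (Finset.mem_univ y)
    rw [mXW]; exact lt_of_lt_of_le h1 h2
  have posYW : ∀ t : α × β × γ, a t ≠ 0 → 0 < prob p (fun ω => (Y ω, W ω)) (t.2.1, t.2.2) := by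
    rintro ⟨x, y, w⟩ h
    have h1 : 0 < a (x, y, w) := lt_of_le_of_ne (ha _) (Ne.symm h)
    have h2 : a (x, y, w) ≤ ∑ x', a (x', y, w) :=
      Finset.single_le_sum (f := fun x' => a (x', y, w)) (fun x' _ => ha _) (Finset.mem_univ x)
    rw [mYW]; exact lt_of_lt_of_le h1 h2
  have posW : ∀ t : α × β × γ, a t ≠ 0 → 0 < prob p W t.2.2 := by
    rintro ⟨x, y, w⟩ h
    have h2 : prob p (fun ω => (X ω, W ω)) (x, w) ≤ ∑ x', prob p (fun ω => (X ω, W ω)) (x', w) :=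
      Finset.single_le_sum (f := fun x' => prob p (fun ω => (X ω, W ω)) (x', w))
        (fun x' _ => prob_nonneg p hp _ _) (Finset.mem_univ x)
    rw [mW]; exact lt_of_lt_of_le (posXW (x, y, w) h) h2
  have hab : ∀ t, a t ≠ 0 → b t ≠ 0 := by
    intro t h
    exact ne_of_gt (div_pos (mul_pos (posXW t h) (posYW t h)) (posW t h))
  have hsa : ∑ t, a t = 1 := sum_prob p hp T
  have hsb : ∑ t, b t ≤ 1 := by
    have e : ∑ t, b t = ∑ w, (prob p W w) * (prob p W w) / prob p W w := by
      rw [sum_triple]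
      have h1 : ∀ x : α, (∑ y : β, ∑ w : γ,
          prob p (fun ω => (X ω, W ω)) (x, w) * prob p (fun ω => (Y ω, W ω)) (y, w)
            / prob p W w)
          = ∑ w : γ, ∑ y : β,
          prob p (fun ω => (X ω, W ω)) (x, w) * prob p (fun ω => (Y ω, W ω)) (y, w)
            / prob p W w := fun x => Finset.sum_comm
      simp only [hbb, h1]
      rw [Finset.sum_comm]
      refine Finset.sum_congr rfl fun w _ => ?_
      rw [sum_mul_sum_div, ← mW w, ← mW' w]
    rw [e]
    calc ∑ w, prob p W w * prob p W w / prob p W w ≤ ∑ w, prob p W w := by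
          refine Finset.sum_le_sum fun w _ => ?_
          by_cases h : prob p W w = 0
          · simp [h]
          · rw [mul_div_assoc, div_self h, mul_one]
      _ = 1 := sum_prob p hp W
  have key : condMutInfo p X Y W = -∑ t, a t * (Real.logb 2 (b t) - Real.logb 2 (a t)) := by
    have e2 : ∑ t, a t * Real.logb 2 (b t)
        = ∑ t : α × β × γ, (a t * Real.logb 2 (prob p (fun ω => (X ω, W ω)) (t.1, t.2.2))
            + a t * Real.logb 2 (prob p (fun ω => (Y ω, W ω)) (t.2.1, t.2.2))
            - a t * Real.logb 2 (prob p W t.2.2)) := by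
      refine Finset.sum_congr rfl fun t _ => ?_
      by_cases h : a t = 0
      · simp [h]
      · rw [hbb]
        dsimp only
        rw [Real.logb_div (mul_ne_zero (posXW t h).ne' (posYW t h).ne') (posW t h).ne',
          Real.logb_mul (posXW t h).ne' (posYW t h).ne']
        ring
    have e3 : ∑ t : α × β × γ, a t * Real.logb 2 (prob p (fun ω => (X ω, W ω)) (t.1, t.2.2))
        = -(entropy p (fun ω => (X ω, W ω))) := by
      rw [sum_triple]
      dsimp only
      unfold entropy
      rw [neg_neg, Fintype.sum_prod_type]
      refine Finset.sum_congr rfl fun x _ => ?_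
      rw [Finset.sum_comm]
      refine Finset.sum_congr rfl fun w _ => ?_
      rw [mXW x w, Finset.sum_mul]
    have e4 : ∑ t : α × β × γ, a t * Real.logb 2 (prob p (fun ω => (Y ω, W ω)) (t.2.1, t.2.2))
        = -(entropy p (fun ω => (Y ω, W ω))) := by
      rw [sum_triple]
      dsimp only
      unfold entropy
      rw [neg_neg, Fintype.sum_prod_type, Finset.sum_comm]
      refine Finset.sum_congr rfl fun y _ => ?_
      rw [Finset.sum_comm]
      refine Finset.sum_congr rfl fun w _ => ?_
      rw [mYW y w, Finset.sum_mul]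
    have e5 : ∑ t : α × β × γ, a t * Real.logb 2 (prob p W t.2.2)
        = -(entropy p W) := by
      rw [sum_triple]
      dsimp only
      unfold entropy
      rw [neg_neg]
      have h1 : ∀ x : α, (∑ y : β, ∑ w : γ, a (x, y, w) * Real.logb 2 (prob p W w))
          = ∑ w : γ, ∑ y : β, a (x, y, w) * Real.logb 2 (prob p W w) :=
        fun x => Finset.sum_comm
      simp only [h1]
      rw [Finset.sum_comm]
      refine Finset.sum_congr rfl fun w _ => ?_
      rw [mW w, Finset.sum_mul]
      refine Finset.sum_congr rfl fun x _ => ?_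
      rw [mXW x w, Finset.sum_mul]
    have e1 : ∑ t, a t * Real.logb 2 (a t) = -(entropy p T) := by
      unfold entropy; rw [neg_neg]
    have expand : ∑ t, a t * (Real.logb 2 (b t) - Real.logb 2 (a t))
        = (∑ t, a t * Real.logb 2 (b t)) - ∑ t, a t * Real.logb 2 (a t) := by
      rw [← Finset.sum_sub_distrib]
      exact Finset.sum_congr rfl fun t _ => by ring
    rw [expand, e2, e1]
    rw [Finset.sum_sub_distrib, Finset.sum_add_distrib, e3, e4, e5]
    unfold condMutInfo
    have hTe : entropy p T = entropy p (fun ω => (X ω, Y ω, W ω)) := rfl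
    rw [hTe]
    ring
  rw [key]
  have := gibbs a b ha hb hab hsa hsb
  linarith


/-- `H W ≤ H (X, W)`. -/
lemma entropy_le_pair (hp : IsPMF p) {α γ : Type} [Fintype α] [Fintype γ]
    (X : Ω → α) (W : Ω → γ) :
    entropy p W ≤ entropy p (fun ω => (X ω, W ω)) := by
  unfold entropy
  rw [neg_le_neg_iff, Fintype.sum_prod_type, Finset.sum_comm]
  refine Finset.sum_le_sum fun w _ => ?_
  rw [marginal_pair_right p X W w, Finset.sum_mul]
  refine Finset.sum_le_sum fun x _ => ?_
  by_cases h : prob p (fun ω => (X ω, W ω)) (x, w) = 0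
  · simp [h]
  · have hpos : 0 < prob p (fun ω => (X ω, W ω)) (x, w) :=
      lt_of_le_of_ne (prob_nonneg p hp _ _) (Ne.symm h)
    have hle : prob p (fun ω => (X ω, W ω)) (x, w)
        ≤ ∑ x', prob p (fun ω => (X ω, W ω)) (x', w) :=
      Finset.single_le_sum (f := fun x' => prob p (fun ω => (X ω, W ω)) (x', w))
        (fun x' _ => prob_nonneg p hp _ _) (Finset.mem_univ x)
    refine mul_le_mul_of_nonneg_left ?_ hpos.le
    exact (Real.logb_le_logb one_lt_two hpos (lt_of_lt_of_le hpos hle)).mpr hle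

/-- Chain rule identity: `I(X;(Y,W)) = I(X;W) + I(X;Y|W)`. -/
lemma chain {α β γ : Type} [Fintype α] [Fintype β] [Fintype γ]
    (X : Ω → α) (Y : Ω → β) (W : Ω → γ) :
    mutInfo p X (fun ω => (Y ω, W ω)) = mutInfo p X W + condMutInfo p X Y W := by
  unfold mutInfo condMutInfo
  ring

lemma entropy_pair_comm {α β : Type} [Fintype α] [Fintype β] (X : Ω → α) (Y : Ω → β) :
    entropy p (fun ω => (X ω, Y ω)) = entropy p (fun ω => (Y ω, X ω)) := by
  have h := entropy_comp_inj p (fun ω => (Y ω, X ω)) (fun q => (q.2, q.1))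
    (fun q q' h => by
      cases q; cases q'
      simpa [Prod.ext_iff, and_comm] using h)
  dsimp only at h
  exact h

lemma mutInfo_comm {α β : Type} [Fintype α] [Fintype β] (X : Ω → α) (Y : Ω → β) :
    mutInfo p X Y = mutInfo p Y X := by
  unfold mutInfo
  rw [entropy_pair_comm]
  ring

lemma cmi_comm {α β γ : Type} [Fintype α] [Fintype β] [Fintype γ]
    (X : Ω → α) (Y : Ω → β) (W : Ω → γ) :
    condMutInfo p X Y W = condMutInfo p Y X W := by
  unfold condMutInfo
  have h := entropy_comp_inj p (fun ω => (Y ω, X ω, W ω))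
    (fun q : β × α × γ => (q.2.1, q.1, q.2.2))
    (fun q q' h => by
      cases q; cases q'
      simp only [Prod.ext_iff] at h ⊢
      tauto)
  rw [← h]
  ring

lemma mutInfo_comp_right_inj {α β γ : Type} [Fintype α] [Fintype β] [Fintype γ]
    (X : Ω → α) (Y : Ω → β) (f : β → γ) (hf : Function.Injective f) :
    mutInfo p X (fun ω => f (Y ω)) = mutInfo p X Y := by
  unfold mutInfo
  rw [entropy_comp_inj p Y f hf]
  have h := entropy_comp_inj p (fun ω => (X ω, Y ω)) (Prod.map id f)
    (Function.Injective.prodMap Function.injective_id hf)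
  have h2 : (fun ω => Prod.map id f ((fun ω' => (X ω', Y ω')) ω))
      = fun ω => (X ω, f (Y ω)) := rfl
  rw [h2] at h
  rw [h]

lemma entropy_const (hp : IsPMF p) {α : Type} [Fintype α] (c : α) :
    entropy p (fun _ => c) = 0 := by
  unfold entropy
  rw [neg_eq_zero]
  refine Finset.sum_eq_zero fun x _ => ?_
  by_cases h : x = c
  · subst h
    have : prob p (fun _ : Ω => x) x = 1 := by
      unfold prob; simpa using hp.2
    simp [this]
  · have : prob p (fun _ : Ω => c) x = 0 := by
      unfold prob
      refine Finset.sum_eq_zero fun ω _ => ?_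
      simp [Ne.symm h]
    simp [this]

lemma mutInfo_nonneg (hp : IsPMF p) {α β : Type} [Fintype α] [Fintype β]
    (X : Ω → α) (Y : Ω → β) : 0 ≤ mutInfo p X Y := by
  have h := cmi_nonneg p hp X Y (fun _ => ())
  unfold condMutInfo at h
  unfold mutInfo
  have e1 : entropy p (fun ω => (X ω, ())) = entropy p X :=
    entropy_comp_inj p X (fun x => (x, ())) (fun a b h => by simpa [Prod.ext_iff] using h)
  have e2 : entropy p (fun ω => (Y ω, ())) = entropy p Y :=
    entropy_comp_inj p Y (fun y => (y, ())) (fun a b h => by simpa [Prod.ext_iff] using h)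
  have e3 : entropy p (fun ω => (X ω, Y ω, ())) = entropy p (fun ω => (X ω, Y ω)) :=
    entropy_comp_inj p (fun ω => (X ω, Y ω)) (fun q => (q.1, q.2, ()))
      (fun a b h => by
        cases a; cases b
        simpa [Prod.ext_iff] using h)
  have e4 : entropy p (fun _ : Ω => ()) = 0 := entropy_const p hp ()
  rw [e1, e2, e3, e4] at h
  linarith

/-- Data-processing: `I(X; h∘Y) ≤ I(X;Y)`. -/
lemma dpi (hp : IsPMF p) {α β γ : Type} [Fintype α] [Fintype β] [Fintype γ]
    (X : Ω → α) (Y : Ω → β) (h : β → γ) :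
    mutInfo p X (fun ω => h (Y ω)) ≤ mutInfo p X Y := by
  have e1 : mutInfo p X (fun ω => (Y ω, h (Y ω))) = mutInfo p X Y :=
    mutInfo_comp_right_inj p X Y (fun y => (y, h y))
      (fun a b hab => congrArg Prod.fst hab)
  have e2 : mutInfo p X (fun ω => (Y ω, h (Y ω)))
      = mutInfo p X (fun ω => h (Y ω)) + condMutInfo p X Y (fun ω => h (Y ω)) :=
    chain p X Y (fun ω => h (Y ω))
  have e3 := cmi_nonneg p hp X Y (fun ω => h (Y ω))
  linarith

lemma mutInfo_le_entropy_left (hp : IsPMF p) {α β : Type} [Fintype α] [Fintype β]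
    (X : Ω → α) (Y : Ω → β) : mutInfo p X Y ≤ entropy p X := by
  unfold mutInfo
  have h1 : entropy p Y ≤ entropy p (fun ω => (X ω, Y ω)) := entropy_le_pair p hp X Y
  linarith


lemma card_ext {n : ℕ} (D : Finset (Fin n)) (v : {i // i ∈ D} → Bool) :
    (Finset.univ.filter
        (fun u : Fin n → Bool => (fun i : {i // i ∈ D} => u i.1) = v)).card
      = 2 ^ (n - D.card) := by
  rw [← Fintype.card_subtype]
  have e : {u : Fin n → Bool // (fun i : {i // i ∈ D} => u i.1) = v}
      ≃ ({i : Fin n // i ∉ D} → Bool) :=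
    { toFun := fun x j => x.1 j.1
      invFun := fun y => ⟨fun i => if h : i ∈ D then v ⟨i, h⟩ else y ⟨i, h⟩, by
        funext i
        simp [i.2]⟩
      left_inv := fun x => Subtype.ext (funext fun i => by
        by_cases h : i ∈ D
        · simp only [dif_pos h]
          exact (congrFun x.2 ⟨i, h⟩).symm
        · simp [h])
      right_inv := fun y => funext fun j => by simp [j.2] }
  rw [Fintype.card_congr e, Fintype.card_fun, Fintype.card_subtype_compl, Fintype.card_fin,
    Fintype.card_coe, Fintype.card_bool]

variable {n : ℕ} (V : Fin n → Ω → Bool)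

lemma prob_VS (hV : ∀ v : Fin n → Bool, prob p (fun ω i => V i ω) v = (1 / 2 : ℝ) ^ n)
    (D : Finset (Fin n)) (v : {i // i ∈ D} → Bool) :
    prob p (fun ω (i : {i // i ∈ D}) => V i.1 ω) v = (1 / 2 : ℝ) ^ D.card := by
  have h := prob_comp p (fun ω (i : Fin n) => V i ω)
    (fun u (i : {i // i ∈ D}) => u i.1) v
  have lhs_eq : prob p (fun ω => (fun u (i : {i // i ∈ D}) => u i.1)
        ((fun ω (i : Fin n) => V i ω) ω)) v
      = prob p (fun ω (i : {i // i ∈ D}) => V i.1 ω) v := rfl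
  rw [lhs_eq] at h
  simp only [hV] at h
  rw [h]
  rw [Finset.sum_ite, Finset.sum_const, Finset.sum_const, card_ext D v]
  have hd : D.card ≤ n := by
    simpa using Finset.card_le_univ D
  have hnum : ((2 : ℕ) ^ (n - D.card) : ℝ) * (1 / 2 : ℝ) ^ n = (1 / 2 : ℝ) ^ D.card := by
    push_cast
    rw [show (1 / 2 : ℝ) ^ n = (1 / 2 : ℝ) ^ D.card * (1 / 2 : ℝ) ^ (n - D.card) by
      rw [← pow_add, Nat.add_sub_cancel' hd]]
    rw [mul_comm ((1 / 2 : ℝ) ^ D.card) _, ← mul_assoc, ← mul_pow]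
    norm_num
  rw [smul_zero, add_zero, nsmul_eq_mul]
  exact_mod_cast hnum

lemma entropy_VS (hp : IsPMF p)
    (hV : ∀ v : Fin n → Bool, prob p (fun ω i => V i ω) v = (1 / 2 : ℝ) ^ n)
    (D : Finset (Fin n)) :
    entropy p (fun ω (i : {i // i ∈ D}) => V i.1 ω) = D.card := by
  unfold entropy
  rw [Finset.sum_congr rfl fun v _ => by rw [prob_VS p V hV D v]]
  rw [Finset.sum_const, Finset.card_univ, Fintype.card_fun, Fintype.card_coe,
    Fintype.card_bool]
  have hlogb : Real.logb 2 ((1 / 2 : ℝ) ^ D.card) = -(D.card : ℝ) := by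
    rw [Real.logb_pow]
    rw [one_div, Real.logb_inv, Real.logb_self_eq_one (by norm_num : (1:ℝ) < 2)]
    ring
  rw [hlogb, nsmul_eq_mul]
  push_cast
  have hpow : ((2 : ℝ)) ^ D.card * (1 / 2 : ℝ) ^ D.card = 1 := by
    rw [← mul_pow]; norm_num
  nlinarith [hpow]


variable (hp : IsPMF p) {n : ℕ} (V : Fin n → Ω → Bool) {ζ : Type} [Fintype ζ] (Z : Ω → ζ)
  (hV : ∀ v : Fin n → Bool, prob p (fun ω i => V i ω) v = (1 / 2 : ℝ) ^ n)

include hp hV in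
lemma key_induction (S : Finset (Fin n)) :
    mutInfo p Z (fun ω (i : {i // i ∈ S}) => V i.1 ω)
      ≤ ∑ i ∈ S, mutInfo p (V i)
          (fun ω => (Z ω, fun j : Fin i.val => V (Fin.castLE i.isLt.le j) ω)) := by
  induction S using Finset.induction_on_max with
  | empty =>
    rw [Finset.sum_empty]
    calc mutInfo p Z (fun ω (i : {i // i ∈ (∅ : Finset (Fin n))}) => V i.1 ω)
        = mutInfo p (fun ω (i : {i // i ∈ (∅ : Finset (Fin n))}) => V i.1 ω) Z :=
          mutInfo_comm p _ _
      _ ≤ entropy p (fun ω (i : {i // i ∈ (∅ : Finset (Fin n))}) => V i.1 ω) :=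
          mutInfo_le_entropy_left p hp _ _
      _ = ((∅ : Finset (Fin n)).card : ℝ) := entropy_VS p V hp hV ∅
      _ = 0 := by simp
  | insert a S hmax ih =>
    have haS : a ∉ S := fun h => lt_irrefl a (hmax a h)
    -- the injective recoding insert a S → Bool × (S → Bool)
    set f : ({i // i ∈ insert a S} → Bool) → Bool × ({i // i ∈ S} → Bool) :=
      fun u => (u ⟨a, Finset.mem_insert_self a S⟩,
        fun i => u ⟨i.1, Finset.mem_insert_of_mem i.2⟩) with hfdef
    have hf : Function.Injective f := by
      intro u u' h
      funext ⟨i, hi⟩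
      rcases Finset.mem_insert.mp hi with rfl | hiS
      · exact congrArg Prod.fst h
      · exact congrFun (congrArg Prod.snd h) ⟨i, hiS⟩
    have e_rec0 := mutInfo_comp_right_inj p Z
      (fun ω (i : {i // i ∈ insert a S}) => V i.1 ω) f hf
    have e_rec : mutInfo p Z (fun ω => (V a ω, fun (i : {i // i ∈ S}) => V i.1 ω))
        = mutInfo p Z (fun ω (i : {i // i ∈ insert a S}) => V i.1 ω) := e_rec0
    have e_pair0 := entropy_comp_inj p
      (fun ω (i : {i // i ∈ insert a S}) => V i.1 ω) f hf
    have e_pair : entropy p (fun ω => (V a ω, fun (i : {i // i ∈ S}) => V i.1 ω))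
        = entropy p (fun ω (i : {i // i ∈ insert a S}) => V i.1 ω) := e_pair0
    have e_single : entropy p (V a) = 1 := by
      have h1 := entropy_comp_inj p
        (fun ω (i : {i // i ∈ ({a} : Finset (Fin n))}) => V i.1 ω)
        (fun u => u ⟨a, Finset.mem_singleton_self a⟩)
        (by
          intro u u' h
          funext ⟨i, hi⟩
          have : i = a := Finset.mem_singleton.mp hi
          subst this
          exact h)
      have h2 := entropy_VS p V hp hV ({a} : Finset (Fin n))
      rw [h2] at h1
      simpa using h1
    have indep : mutInfo p (V a) (fun ω (i : {i // i ∈ S}) => V i.1 ω) = 0 := by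
      unfold mutInfo
      rw [e_single, entropy_VS p V hp hV S, e_pair, entropy_VS p V hp hV (insert a S),
        Finset.card_insert_of_notMem haS]
      push_cast
      ring
    have hchain := chain p Z (V a) (fun ω (i : {i // i ∈ S}) => V i.1 ω)
    have hchain2 := chain p (V a) Z (fun ω (i : {i // i ∈ S}) => V i.1 ω)
    have hcomm := cmi_comm p Z (V a) (fun ω (i : {i // i ∈ S}) => V i.1 ω)
    -- data processing
    have hdpi : mutInfo p (V a) (fun ω => (Z ω, fun (i : {i // i ∈ S}) => V i.1 ω))
        ≤ mutInfo p (V a)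
            (fun ω => (Z ω, fun j : Fin a.val => V (Fin.castLE a.isLt.le j) ω)) := by
      have hlt : ∀ i : {i // i ∈ S}, i.1.val < a.val := fun i => hmax i.1 i.2
      have h := dpi p hp (V a)
        (fun ω => (Z ω, fun j : Fin a.val => V (Fin.castLE a.isLt.le j) ω))
        (fun q => (q.1, fun i : {i // i ∈ S} => q.2 ⟨i.1.val, hlt i⟩))
      have heq : (fun ω => ((fun q : ζ × (Fin a.val → Bool) =>
            (q.1, fun i : {i // i ∈ S} => q.2 ⟨i.1.val, hlt i⟩))
            ((fun ω' => (Z ω', fun j : Fin a.val => V (Fin.castLE a.isLt.le j) ω')) ω)))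
          = fun ω => (Z ω, fun (i : {i // i ∈ S}) => V i.1 ω) := rfl
      rw [heq] at h
      exact h
    have hsum : ∑ i ∈ insert a S, mutInfo p (V i)
          (fun ω => (Z ω, fun j : Fin i.val => V (Fin.castLE i.isLt.le j) ω))
        = mutInfo p (V a)
            (fun ω => (Z ω, fun j : Fin a.val => V (Fin.castLE a.isLt.le j) ω))
          + ∑ i ∈ S, mutInfo p (V i)
              (fun ω => (Z ω, fun j : Fin i.val => V (Fin.castLE i.isLt.le j) ω)) :=
      Finset.sum_insert haS
    rw [hsum, ← e_rec, hchain, hcomm]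
    have : condMutInfo p (V a) Z (fun ω (i : {i // i ∈ S}) => V i.1 ω)
        = mutInfo p (V a) (fun ω => (Z ω, fun (i : {i // i ∈ S}) => V i.1 ω)) := by
      rw [hchain2, indep] at *
      linarith [hchain2]
    rw [this]
    linarith [hdpi, ih]

include hp hV in
theorem stmt4' (A R B : Finset (Fin n))
    (hAR : Disjoint A R) (hAB : Disjoint A B) (hRB : Disjoint R B)
    (hcover : A ∪ R ∪ B = Finset.univ) :
    condMutInfo p (fun ω (i : {i // i ∈ A}) => V i.1 ω) Z
        (fun ω (i : {i // i ∈ B}) => V i.1 ω)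
      ≤ min (∑ i ∈ A ∪ B, mutInfo p (V i)
              (fun ω => (Z ω, fun j : Fin i.val => V (Fin.castLE i.isLt.le j) ω)))
          (A.card : ℝ) := by
  refine le_min ?_ ?_
  · -- bound by sum of bit-channel capacities
    set f : ({i // i ∈ A ∪ B} → Bool) → ({i // i ∈ A} → Bool) × ({i // i ∈ B} → Bool) :=
      fun u => (fun i => u ⟨i.1, Finset.mem_union_left B i.2⟩,
        fun i => u ⟨i.1, Finset.mem_union_right A i.2⟩) with hfdef
    have hf : Function.Injective f := by
      intro u u' h
      funext ⟨i, hi⟩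
      rcases Finset.mem_union.mp hi with hiA | hiB
      · exact congrFun (congrArg Prod.fst h) ⟨i, hiA⟩
      · exact congrFun (congrArg Prod.snd h) ⟨i, hiB⟩
    have e_rec0 := mutInfo_comp_right_inj p Z
      (fun ω (i : {i // i ∈ A ∪ B}) => V i.1 ω) f hf
    have e_rec : mutInfo p Z (fun ω => ((fun (i : {i // i ∈ A}) => V i.1 ω),
          (fun (i : {i // i ∈ B}) => V i.1 ω)))
        = mutInfo p Z (fun ω (i : {i // i ∈ A ∪ B}) => V i.1 ω) := e_rec0
    have hchain := chain p Z (fun ω (i : {i // i ∈ A}) => V i.1 ω)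
      (fun ω (i : {i // i ∈ B}) => V i.1 ω)
    have hcomm := cmi_comm p Z (fun ω (i : {i // i ∈ A}) => V i.1 ω)
      (fun ω (i : {i // i ∈ B}) => V i.1 ω)
    have hnn := mutInfo_nonneg p hp Z (fun ω (i : {i // i ∈ B}) => V i.1 ω)
    have hkey := key_induction p hp V Z hV (A ∪ B)
    rw [hcomm] at hchain
    rw [e_rec] at hchain
    linarith
  · -- bound by k = |A|
    have hchain := chain p (fun ω (i : {i // i ∈ A}) => V i.1 ω) Z
      (fun ω (i : {i // i ∈ B}) => V i.1 ω)
    have hnn := mutInfo_nonneg p hp (fun ω (i : {i // i ∈ A}) => V i.1 ω)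
      (fun ω (i : {i // i ∈ B}) => V i.1 ω)
    have hle := mutInfo_le_entropy_left p hp (fun ω (i : {i // i ∈ A}) => V i.1 ω)
      (fun ω => (Z ω, fun (i : {i // i ∈ B}) => V i.1 ω))
    have hA := entropy_VS p V hp hV A
    rw [hA] at hle
    linarith


end SecrecyAux

/-- **Proposition 1** (channel-independent form). In the secrecy-code setup —
`V 1, …, V n` i.i.d. uniform bits, `Z` arbitrary, `{1,…,n} = A ∪ R ∪ B` a partition —
`I(V_A ; Z ∣ V_B) ≤ min (∑_{i∈A∪B} C_i) k`,
where `C_i = I(V i ; (Z, V_{<i}))` and `k = |A|`. -/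
theorem stmt4 {Ω : Type} [Fintype Ω] (p : Ω → ℝ) (hp : IsPMF p)
    {n : ℕ} (V : Fin n → Ω → Bool) {ζ : Type} [Fintype ζ] (Z : Ω → ζ)
    (hV : ∀ v : Fin n → Bool, prob p (fun ω i => V i ω) v = (1 / 2 : ℝ) ^ n)
    (A R B : Finset (Fin n))
    (hAR : Disjoint A R) (hAB : Disjoint A B) (hRB : Disjoint R B)
    (hcover : A ∪ R ∪ B = Finset.univ) :
    condMutInfo p (fun ω (i : {i // i ∈ A}) => V i.1 ω) Z
        (fun ω (i : {i // i ∈ B}) => V i.1 ω)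
      ≤ min (∑ i ∈ A ∪ B, mutInfo p (V i)
              (fun ω => (Z ω, fun j : Fin i.val => V (Fin.castLE i.isLt.le j) ω)))
          (A.card : ℝ) := by
  exact SecrecyAux.stmt4' p hp V Z hV A R B hAR hAB hRB hcover
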